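/- Let n ≥ 1 and P = Z/2^nZ ⊕ Z/2^{n+1}Z. Then SpecR(P) = {2^i : 1 ≤ i ≤ 2n+1}. -/

import Mathlib

/-- The Reidemeister number of an (additive) endomorphism `φ`: the number of
`φ`-twisted conjugacy classes, where `x` and `y` are `φ`-conjugate iff
`x = z + y - φ z` for some `z`. -/
noncomputable def twistedClasses {A : Type*} [AddCommGroup A] (φ : A →+ A) : ℕ :=
  Nat.card (Quot (fun x y : A => ∃ z : A, x = z + y - φ z))

/-- The Reidemeister spectrum: the set of Reidemeister numbers of automorphisms. -/
noncomputable def reidSpec (A : Type*) [AddCommGroup A] : Set ℕ :=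
  {r | ∃ φ : A ≃+ A, twistedClasses φ.toAddMonoidHom = r}

theorem twistedClasses_eq_card_ker {A : Type*} [AddCommGroup A] [Finite A] (φ : A →+ A) :
    twistedClasses φ = Nat.card (AddMonoidHom.id A - φ).ker := by
  set ψ := AddMonoidHom.id A - φ with hψ
  have e : Quot (fun x y : A => ∃ z : A, x = z + y - φ z) ≃ A ⧸ ψ.range := by
    refine Quot.congrRight fun a b => ?_
    show _ ↔ (QuotientAddGroup.leftRel ψ.range) a b
    rw [QuotientAddGroup.leftRel_apply, AddMonoidHom.mem_range]
    constructor
    · rintro ⟨z, rfl⟩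
      refine ⟨-z, ?_⟩
      simp only [hψ, AddMonoidHom.sub_apply, AddMonoidHom.id_apply, map_neg]
      abel
    · rintro ⟨z, hz⟩
      simp only [hψ, AddMonoidHom.sub_apply, AddMonoidHom.id_apply] at hz
      refine ⟨-z, ?_⟩
      have : a - (-z + b - φ (-z)) = (z - φ z) - (-a + b) := by
        rw [map_neg]; abel
      rw [hz, sub_self] at this
      exact sub_eq_zero.mp this
  have h1 : Nat.card A = Nat.card (A ⧸ ψ.range) * Nat.card ψ.range :=
    AddSubgroup.card_eq_card_quotient_mul_card_addSubgroup _
  have h2 : Nat.card A = Nat.card (A ⧸ ψ.ker) * Nat.card ψ.ker :=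
    AddSubgroup.card_eq_card_quotient_mul_card_addSubgroup _
  have h3 : Nat.card (A ⧸ ψ.ker) = Nat.card ψ.range :=
    Nat.card_congr (QuotientAddGroup.quotientKerEquivRange ψ).toEquiv
  have hpos : 0 < Nat.card ψ.range := Nat.card_pos
  have : Nat.card (A ⧸ ψ.range) * Nat.card ψ.range = Nat.card ψ.ker * Nat.card ψ.range := by
    rw [← h1, h2, h3]; ring
  have h4 : Nat.card (A ⧸ ψ.range) = Nat.card ψ.ker :=
    Nat.eq_of_mul_eq_mul_right hpos this
  rw [twistedClasses, Nat.card_congr e, h4]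
theorem card_ker_mul {N d e : ℕ} [NeZero N] (hN : N = d * e) :
    Nat.card {x : ZMod N // (e : ZMod N) * x = 0} = e := by
  subst hN
  have hNpos : 0 < d * e := Nat.pos_of_ne_zero (NeZero.ne _)
  obtain ⟨hd0, he0⟩ : d ≠ 0 ∧ e ≠ 0 := mul_ne_zero_iff.mp (by omega)
  have hd : 0 < d := Nat.pos_of_ne_zero hd0
  have he : 0 < e := Nat.pos_of_ne_zero he0
  have key : ∀ x : ZMod (d * e), (e : ZMod (d * e)) * x = 0 ↔ d ∣ x.val := by
    intro x
    rw [show (e : ZMod (d * e)) * x = ((e * x.val : ℕ) : ZMod (d * e)) by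
      push_cast [ZMod.natCast_val, ZMod.cast_id]; ring]
    rw [ZMod.natCast_eq_zero_iff, mul_comm e x.val]
    exact Nat.mul_dvd_mul_iff_right he
  have e1 : {x : ZMod (d * e) // (e : ZMod (d * e)) * x = 0} ≃ {x : ZMod (d * e) // d ∣ x.val} :=
    Equiv.subtypeEquivRight key
  have e2 : {x : ZMod (d * e) // d ∣ x.val} ≃ Fin e := by
    refine ⟨fun x => ⟨x.1.val / d, ?_⟩, fun y => ⟨((y.val * d : ℕ) : ZMod (d * e)), ?_⟩, ?_, ?_⟩
    · exact Nat.div_lt_of_lt_mul x.1.val_lt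
    · rw [ZMod.val_natCast_of_lt (by rw [mul_comm d e]; exact (Nat.mul_lt_mul_right hd).mpr y.isLt)]
      exact dvd_mul_left d y.val
    · rintro ⟨x, hx⟩
      ext
      simp only
      rw [Nat.div_mul_cancel hx]
      exact ZMod.natCast_rightInverse x
    · rintro ⟨y, hy⟩
      ext
      simp only
      rw [ZMod.val_natCast_of_lt (by rw [mul_comm d e]; exact (Nat.mul_lt_mul_right hd).mpr hy)]
      exact Nat.eq_of_mul_eq_mul_right hd (Nat.div_mul_cancel (dvd_mul_left d y))
  rw [Nat.card_congr (e1.trans e2), Nat.card_eq_fintype_card, Fintype.card_fin]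
theorem card_fix_pow {m j : ℕ} (hj : j ≤ m) :
    Nat.card {x : ZMod (2^m) // (2^j : ZMod (2^m)) * x = 0} = 2^j := by
  haveI : NeZero (2^m) := ⟨pow_ne_zero _ two_ne_zero⟩
  have h : (2^m) = 2^(m-j) * 2^j := by rw [← pow_add]; congr 1; omega
  have hc := card_ker_mul (N := 2^m) (d := 2^(m-j)) (e := 2^j) h
  rw [← hc]
  apply Nat.card_congr (Equiv.subtypeEquivRight _)
  intro x
  push_cast
  rfl

theorem exists_aut_pow {m j : ℕ} (hj1 : 1 ≤ j) (hjm : j ≤ m) :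
    ∃ ψ : ZMod (2^m) ≃+ ZMod (2^m), Nat.card {x : ZMod (2^m) // ψ x = x} = 2^j := by
  have hodd : Odd (1 + 2^j) := by
    rcases Nat.even_or_odd (1 + 2^j) with h | h
    · exfalso
      have : Even (2^j) := (Nat.even_pow' (by omega)).mpr even_two
      rcases this with ⟨k, hk⟩
      rcases h with ⟨l, hl⟩
      omega
    · exact h
  have hcop : Nat.Coprime (1 + 2^j) (2^m) :=
    Nat.Coprime.pow_right _ (Nat.coprime_two_right.mpr hodd)
  refine ⟨(AddAut.mulLeft (ZMod.unitOfCoprime _ hcop) : AddAut (ZMod (2^m))), ?_⟩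
  refine Eq.trans ?_ (card_fix_pow hjm)
  apply Nat.card_congr (Equiv.subtypeEquivRight _)
  intro x
  show (ZMod.unitOfCoprime _ hcop : ZMod (2^m)) * x = x ↔ _
  rw [ZMod.coe_unitOfCoprime]
  push_cast
  rw [add_mul, one_mul, add_eq_left]

section special
variable (n : ℕ)

-- the hom ZMod (2^n) →+ ZMod (2^(n+1)) sending 1 to 2
noncomputable def cHom : ZMod (2^n) →+ ZMod (2^(n+1)) :=
  ZMod.lift (2^n) ⟨(zmultiplesHom (ZMod (2^(n+1)))) 2, by
    simp only [zmultiplesHom_apply]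
    rw [zsmul_eq_mul]
    push_cast
    rw [show ((2:ZMod (2^(n+1)))^n * 2 = (2:ZMod (2^(n+1)))^(n+1)) by ring]
    rw [show ((2:ZMod (2^(n+1)))^(n+1) = ((2^(n+1) : ℕ) : ZMod (2^(n+1)))) by push_cast; ring]
    exact ZMod.natCast_self _⟩

theorem cHom_apply (x : ZMod (2^n)) : cHom n x = ((2 * x.val : ℕ) : ZMod (2^(n+1))) := by
  haveI : NeZero (2^n) := ⟨pow_ne_zero _ two_ne_zero⟩
  conv_lhs => rw [show x = ((x.val : ℤ) : ZMod (2^n)) by push_cast [ZMod.natCast_val, ZMod.cast_id]; rfl]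
  rw [cHom, ZMod.lift_coe]
  simp only [zmultiplesHom_apply, zsmul_eq_mul]
  push_cast
  ring

noncomputable def specHom : (ZMod (2^n) × ZMod (2^(n+1))) →+ (ZMod (2^n) × ZMod (2^(n+1))) :=
  AddMonoidHom.prod
    ((AddMonoidHom.fst _ _) +
      ((ZMod.castHom (pow_dvd_pow 2 (Nat.le_succ n)) (ZMod (2^n))).toAddMonoidHom.comp
        (AddMonoidHom.snd _ _)))
    (((cHom n).comp (AddMonoidHom.fst _ _)) - (AddMonoidHom.snd _ _))

theorem specHom_apply (p : ZMod (2^n) × ZMod (2^(n+1))) :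
    specHom n p = (p.1 + ZMod.castHom (pow_dvd_pow 2 (Nat.le_succ n)) (ZMod (2^n)) p.2,
      cHom n p.1 - p.2) := rfl

theorem cast_cHom (x : ZMod (2^n)) :
    ZMod.castHom (pow_dvd_pow 2 (Nat.le_succ n)) (ZMod (2^n)) (cHom n x) = 2 * x := by
  haveI : NeZero (2^n) := ⟨pow_ne_zero _ two_ne_zero⟩
  rw [cHom_apply, map_natCast]
  push_cast [ZMod.natCast_val, ZMod.cast_id]
  ring

theorem cast_eq_valCast (y : ZMod (2^(n+1))) :
    ZMod.castHom (pow_dvd_pow 2 (Nat.le_succ n)) (ZMod (2^n)) y = ((y.val : ℕ) : ZMod (2^n)) := by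
  haveI : NeZero (2^(n+1)) := ⟨pow_ne_zero _ two_ne_zero⟩
  conv_lhs => rw [show y = ((y.val : ℕ) : ZMod (2^(n+1))) by
    push_cast [ZMod.natCast_val, ZMod.cast_id]; rfl]
  rw [map_natCast]

theorem specHom_injective : Function.Injective (specHom n) := by
  haveI : NeZero (2^n) := ⟨pow_ne_zero _ two_ne_zero⟩
  rw [injective_iff_map_eq_zero]
  rintro ⟨x, y⟩ hp
  rw [specHom_apply, Prod.ext_iff] at hp
  obtain ⟨h1, h2⟩ := hp
  simp only [Prod.fst_zero, Prod.snd_zero] at h1 h2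
  have hy : y = cHom n x := by rw [sub_eq_zero] at h2; exact h2.symm
  rw [hy, cast_cHom] at h1
  have h3 : (3 : ZMod (2^n)) * x = 0 := by
    have h30 : (3 : ZMod (2^n)) = 1 + 2 := by norm_num
    rw [h30, add_mul, one_mul]; exact h1
  have hu : IsUnit (3 : ZMod (2^n)) := by
    rw [show ((3 : ZMod (2^n)) = ((3 : ℕ) : ZMod (2^n))) by push_cast; ring]
    rw [ZMod.isUnit_iff_coprime]
    exact Nat.Coprime.pow_right _ (by norm_num)
  have hx : x = 0 := by
    rcases hu with ⟨u, hu⟩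
    have := congrArg (fun t => (↑u⁻¹ : ZMod (2^n)) * t) h3
    simpa [← hu, ← mul_assoc] using this
  simp [hy, hx]

theorem two_mul_eq_zero_iff {y : ZMod (2^(n+1))} :
    2 * y = 0 ↔ y = 0 ∨ y = ((2^n : ℕ) : ZMod (2^(n+1))) := by
  haveI : NeZero (2^(n+1)) := ⟨pow_ne_zero _ two_ne_zero⟩
  have hyv : y = ((y.val : ℕ) : ZMod (2^(n+1))) := by
    push_cast [ZMod.natCast_val, ZMod.cast_id]; rfl
  constructor
  · intro h
    have h2 : ((2 * y.val : ℕ) : ZMod (2^(n+1))) = 0 := by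
      push_cast [ZMod.natCast_val, ZMod.cast_id]; exact h
    rw [ZMod.natCast_eq_zero_iff] at h2
    have hlt := y.val_lt
    have hdvd : (2:ℕ)^n ∣ y.val := by
      have h2d : 2 * 2^n ∣ 2 * y.val := by
        rw [← pow_succ']; exact h2
      exact (mul_dvd_mul_iff_left (two_ne_zero : (2:ℕ) ≠ 0)).mp h2d
    have hps : (2:ℕ)^(n+1) = 2^n * 2 := pow_succ 2 n
    obtain ⟨m, hm⟩ := hdvd
    have hm2 : m < 2 := Nat.lt_of_mul_lt_mul_left (a := 2^n) (by rw [← hm]; omega)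
    have : y.val = 0 ∨ y.val = 2^n := by
      interval_cases m
      · left; omega
      · right; omega
    rcases this with h' | h'
    · left; rw [hyv, h']; simp
    · right; rw [hyv, h']
  · rintro (rfl | rfl)
    · simp
    · rw [show (2 : ZMod (2^(n+1))) * ((2^n : ℕ) : ZMod (2^(n+1))) = ((2^(n+1) : ℕ) : ZMod (2^(n+1))) by push_cast; ring]
      exact ZMod.natCast_self _

noncomputable def specEquiv : (ZMod (2^n) × ZMod (2^(n+1))) ≃+ (ZMod (2^n) × ZMod (2^(n+1))) := by
  haveI : NeZero (2^n) := ⟨pow_ne_zero _ two_ne_zero⟩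
  haveI : NeZero (2^(n+1)) := ⟨pow_ne_zero _ two_ne_zero⟩
  exact AddEquiv.ofBijective (specHom n)
    ((Finite.injective_iff_bijective).mp (specHom_injective n))

theorem specEquiv_apply (p : ZMod (2^n) × ZMod (2^(n+1))) : specEquiv n p = specHom n p := rfl

theorem card_fix_spec :
    Nat.card {p : ZMod (2^n) × ZMod (2^(n+1)) // specEquiv n p = p} = 2 := by
  haveI : NeZero (2^n) := ⟨pow_ne_zero _ two_ne_zero⟩
  haveI : NeZero (2^(n+1)) := ⟨pow_ne_zero _ two_ne_zero⟩
  set P := ZMod (2^n) × ZMod (2^(n+1))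
  set t : P := ((0 : ZMod (2^n)), ((2^n : ℕ) : ZMod (2^(n+1)))) with ht
  have htne : t ≠ (0 : P) := by
    intro h
    rw [ht, Prod.ext_iff] at h
    have h2 := h.2
    simp only [Prod.snd_zero] at h2
    rw [ZMod.natCast_eq_zero_iff] at h2
    have := Nat.le_of_dvd (pow_pos two_pos n) h2
    have : (2:ℕ)^n < 2^(n+1) := Nat.pow_lt_pow_right one_lt_two (Nat.lt_succ_self n)
    omega
  have hset : {p : P | specEquiv n p = p} = {(0 : P), t} := by
    ext ⟨x, y⟩
    simp only [Set.mem_setOf_eq, Set.mem_insert_iff, Set.mem_singleton_iff]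
    constructor
    · intro hfix
      rw [specEquiv_apply, specHom_apply, Prod.ext_iff] at hfix
      obtain ⟨h1, h2⟩ := hfix
      simp only at h1 h2
      have hcast : ZMod.castHom (pow_dvd_pow 2 (Nat.le_succ n)) (ZMod (2^n)) y = 0 := by
        rwa [add_eq_left] at h1
      have h2y : 2 * y = 0 := by
        rw [cast_eq_valCast, ZMod.natCast_eq_zero_iff] at hcast
        have h2' : ((2 * y.val : ℕ) : ZMod (2^(n+1))) = 0 := by
          rw [ZMod.natCast_eq_zero_iff]
          rcases hcast with ⟨k, hk⟩
          exact ⟨k, by rw [hk]; ring⟩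
        push_cast [ZMod.natCast_val, ZMod.cast_id] at h2'
        exact h2'
      have hcx : cHom n x = 0 := by
        have h' := h2
        rw [sub_eq_iff_eq_add] at h'
        rw [h', ← two_mul]
        exact h2y
      have hx : x = 0 := by
        rw [cHom_apply, ZMod.natCast_eq_zero_iff] at hcx
        have hlt := x.val_lt
        have hdvd : (2:ℕ)^n ∣ x.val := by
          have h2d : 2 * 2^n ∣ 2 * x.val := by rw [← pow_succ']; exact hcx
          exact (mul_dvd_mul_iff_left (two_ne_zero : (2:ℕ) ≠ 0)).mp h2d
        have hv0 : x.val = 0 := Nat.eq_zero_of_dvd_of_lt hdvd hlt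
        have hxv : x = ((x.val : ℕ) : ZMod (2^n)) := by
          push_cast [ZMod.natCast_val, ZMod.cast_id]; rfl
        rw [hxv, hv0]; simp
      have hy : y = 0 ∨ y = ((2^n : ℕ) : ZMod (2^(n+1))) := (two_mul_eq_zero_iff n).mp h2y
      rcases hy with rfl | rfl
      · left; simp [hx]; rfl
      · right; simp [ht, hx]
    · rintro (h | h)
      · rw [h, map_zero]
      · rw [h, ht, specEquiv_apply, specHom_apply, Prod.ext_iff]
        constructor
        · simp only
          rw [map_natCast, ZMod.natCast_self, add_zero]
        · simp only
          rw [map_zero, zero_sub, eq_comm, ← add_eq_zero_iff_eq_neg, ← two_mul]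
          exact (two_mul_eq_zero_iff n).mpr (Or.inr rfl)
  calc Nat.card {p : P // specEquiv n p = p}
      = ({p : P | specEquiv n p = p} : Set P).ncard := (Nat.card_coe_set_eq _).symm
    _ = ({(0 : P), t} : Set P).ncard := by rw [hset]
    _ = 2 := Set.ncard_pair (Ne.symm htne)
end special

theorem twistedClasses_eq_card_fix {A : Type*} [AddCommGroup A] [Finite A] (φ : A ≃+ A) :
    twistedClasses φ.toAddMonoidHom = Nat.card {a : A // φ a = a} := by
  rw [twistedClasses_eq_card_ker]
  apply Nat.card_congr (Equiv.subtypeEquivRight _)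
  intro a
  simp only [AddMonoidHom.mem_ker, AddMonoidHom.sub_apply, AddMonoidHom.id_apply,
    AddEquiv.coe_toAddMonoidHom, sub_eq_zero]
  exact eq_comm

theorem card_fix_prod {α β : Type*} [AddCommGroup α] [AddCommGroup β]
    (f : α ≃+ α) (g : β ≃+ β) :
    Nat.card {p : α × β // (AddEquiv.prodCongr f g) p = p} =
      Nat.card {a : α // f a = a} * Nat.card {b : β // g b = b} := by
  rw [← Nat.card_prod]
  apply Nat.card_congr
  refine (Equiv.subtypeEquivRight ?_).trans (Equiv.subtypeProdEquivProd)
  intro p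
  rw [Prod.ext_iff]
  exact Iff.rfl

theorem aut_fixes (n : ℕ) (φ : (ZMod (2^n) × ZMod (2^(n+1))) ≃+ (ZMod (2^n) × ZMod (2^(n+1)))) :
    φ ((0 : ZMod (2^n)), ((2^n : ℕ) : ZMod (2^(n+1)))) =
      ((0 : ZMod (2^n)), ((2^n : ℕ) : ZMod (2^(n+1)))) := by
  haveI : NeZero (2^n) := ⟨pow_ne_zero _ two_ne_zero⟩
  haveI : NeZero (2^(n+1)) := ⟨pow_ne_zero _ two_ne_zero⟩
  set P := ZMod (2^n) × ZMod (2^(n+1))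
  set t : P := ((0 : ZMod (2^n)), ((2^n : ℕ) : ZMod (2^(n+1)))) with ht
  have htne : t ≠ (0 : P) := by
    intro h
    rw [ht, Prod.ext_iff] at h
    have h2 := h.2
    simp only [Prod.snd_zero] at h2
    rw [ZMod.natCast_eq_zero_iff] at h2
    have hle := Nat.le_of_dvd (pow_pos two_pos n) h2
    have hlt : (2:ℕ)^n < 2^(n+1) := Nat.pow_lt_pow_right one_lt_two (Nat.lt_succ_self n)
    omega
  set s : P := ((0 : ZMod (2^n)), (1 : ZMod (2^(n+1)))) with hs
  have hts : t = (2^n : ℕ) • s := by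
    rw [ht, hs, Prod.ext_iff]
    constructor
    · rw [Prod.smul_fst]; simp
    · rw [Prod.smul_snd]
      show ((2^n : ℕ) : ZMod (2^(n+1))) = (2^n : ℕ) • (1 : ZMod (2^(n+1)))
      rw [nsmul_eq_mul, mul_one]
  have hphit : φ t = (2^n : ℕ) • φ s := by rw [hts, map_nsmul]
  have hfst : (φ t).1 = 0 := by
    rw [hphit, Prod.smul_fst, nsmul_eq_mul]
    rw [show (((2^n : ℕ) : ZMod (2^n))) = 0 from ZMod.natCast_self _]
    ring
  have hsnd : 2 * (φ t).2 = 0 := by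
    rw [hphit, Prod.smul_snd, nsmul_eq_mul, ← mul_assoc]
    rw [show (2 : ZMod (2^(n+1))) * ((2^n : ℕ) : ZMod (2^(n+1))) = ((2^(n+1) : ℕ) : ZMod (2^(n+1))) by push_cast; ring]
    rw [ZMod.natCast_self, zero_mul]
  have hw := (two_mul_eq_zero_iff n).mp hsnd
  rcases hw with hw | hw
  · exfalso
    have h0 : φ t = 0 := by
      rw [Prod.ext_iff]; exact ⟨hfst, hw⟩
    have : t = 0 := by
      have := φ.injective (h0.trans (map_zero φ).symm)
      exact this
    exact htne this
  · rw [ht]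
    rw [Prod.ext_iff]
    exact ⟨hfst, hw⟩

theorem stmt_19 (n : ℕ) (hn : 1 ≤ n) :
    reidSpec (ZMod (2 ^ n) × ZMod (2 ^ (n + 1))) =
      {r | ∃ i, 1 ≤ i ∧ i ≤ 2 * n + 1 ∧ r = 2 ^ i} := by
  haveI : NeZero (2^n) := ⟨pow_ne_zero _ two_ne_zero⟩
  haveI : NeZero (2^(n+1)) := ⟨pow_ne_zero _ two_ne_zero⟩
  ext r
  simp only [reidSpec, Set.mem_setOf_eq]
  constructor
  · rintro ⟨φ, rfl⟩
    rw [twistedClasses_eq_card_ker φ.toAddMonoidHom]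
    set P := ZMod (2^n) × ZMod (2^(n+1))
    set K := (AddMonoidHom.id P - φ.toAddMonoidHom).ker with hK
    have hdvd : Nat.card K ∣ 2^(2*n+1) := by
      have h := AddSubgroup.card_addSubgroup_dvd_card K
      rwa [Nat.card_prod, Nat.card_zmod, Nat.card_zmod, ← pow_add,
        show n + (n+1) = 2*n+1 by ring] at h
    obtain ⟨i, hile, hi⟩ := (Nat.dvd_prime_pow Nat.prime_two).mp hdvd
    refine ⟨i, ?_, hile, hi⟩
    by_contra h0
    push_neg at h0
    have hi0 : i = 0 := by omega
    rw [hi0, pow_zero] at hi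
    set t : P := ((0 : ZMod (2^n)), ((2^n : ℕ) : ZMod (2^(n+1)))) with ht
    have htK : t ∈ K := by
      rw [hK, AddMonoidHom.mem_ker, AddMonoidHom.sub_apply, AddMonoidHom.id_apply,
        AddEquiv.coe_toAddMonoidHom, aut_fixes n φ, sub_self]
    have htne : t ≠ (0 : P) := by
      intro h
      rw [ht, Prod.ext_iff] at h
      have h2 := h.2
      simp only [Prod.snd_zero] at h2
      rw [ZMod.natCast_eq_zero_iff] at h2
      have hle := Nat.le_of_dvd (pow_pos two_pos n) h2
      have hlt : (2:ℕ)^n < 2^(n+1) := Nat.pow_lt_pow_right one_lt_two (Nat.lt_succ_self n)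
      omega
    obtain ⟨x, hx⟩ := Nat.card_eq_one_iff_exists.mp hi
    have e1 := hx ⟨t, htK⟩
    have e2 := hx ⟨0, zero_mem K⟩
    rw [← e2] at e1
    exact htne (Subtype.ext_iff.mp e1)
  · rintro ⟨i, hi1, hi2, rfl⟩
    by_cases hione : i = 1
    · subst hione
      refine ⟨specEquiv n, ?_⟩
      rw [twistedClasses_eq_card_fix, card_fix_spec, pow_one]
    · obtain ⟨j, k, hj1, hjn, hk1, hkn, hjk⟩ :
        ∃ j k, 1 ≤ j ∧ j ≤ n ∧ 1 ≤ k ∧ k ≤ n + 1 ∧ j + k = i :=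
        ⟨max 1 (i - (n+1)), i - max 1 (i - (n+1)), by omega, by omega, by omega, by omega, by omega⟩
      obtain ⟨ψ₁, hψ₁⟩ := exists_aut_pow hj1 hjn
      obtain ⟨ψ₂, hψ₂⟩ := exists_aut_pow hk1 hkn
      refine ⟨AddEquiv.prodCongr ψ₁ ψ₂, ?_⟩
      rw [twistedClasses_eq_card_fix, card_fix_prod, hψ₁, hψ₂, ← pow_add, hjk]
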